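/- Let b ∈ ℕ³ and a = b − e_i, and suppose K^b I is ⟨ij,ik,jk⟩ and K^a I is ⟨j,k⟩. Then the degree-1 canonical sylvan matrix D^{a,b} (rows indexed by the vertices j,k of K^a I, columns by the edges of K^b I) is: D_{j,ij} = (−1)^{i,ij}/2, D_{k,ij} = (−1)^{j,ij}/2; D_{j,ik} = (−1)^{k,ik}/2, D_{k,ik} = (−1)^{i,ik}/2; and D_{v,jk} = 0 for v ∈ {j,k}. -/

import Mathlib

open Classical

noncomputable section

namespace Sylvan

/-- Exponent vectors in three variables. -/
abbrev V3 := Fin 3 → ℕ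

/-- The `i`-th standard basis vector. -/
def stdVec (i : Fin 3) : V3 := fun j => if j = i then 1 else 0

/-- A monomial ideal, identified with its (upward closed) set of exponent vectors. -/
def IsMonomialIdeal (I : Set V3) : Prop :=
  ∀ ⦃c d : V3⦄, c ∈ I → (∀ i, c i ≤ d i) → d ∈ I

/-- The 0-1 indicator vector of a squarefree face. -/
def ind (τ : Finset (Fin 3)) : V3 := fun i => if i ∈ τ then 1 else 0

/-- The Koszul simplicial complex of `I` in degree `b`:
faces `τ` with `b ≥ τ` and `x^(b-τ) ∈ I`. -/
def K (I : Set V3) (b : V3) : Set (Finset (Fin 3)) :=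
  {τ | (∀ i, ind τ i ≤ b i) ∧ (fun i => b i - ind τ i) ∈ I}

/-- `x^a` is a minimal monomial generator of `I`. -/
def IsMinGen (I : Set V3) (a : V3) : Prop :=
  a ∈ I ∧ ∀ c ∈ I, (∀ i, c i ≤ a i) → c = a

/-- Reduced simplicial chains: formal `k`-linear combinations of faces
(the empty face included). -/
abbrev Ch (k : Type) [Field k] := Finset (Fin 3) →₀ k

variable (k : Type) [Field k]

/-- The sign `(-1)^(position of v in σ)`. -/
def esgn (v : Fin 3) (σ : Finset (Fin 3)) : ℤ :=
  (-1 : ℤ) ^ (σ.filter (fun u => u < v)).card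

/-- The boundary of a single face. -/
def bd (σ : Finset (Fin 3)) : Ch k :=
  ∑ v ∈ σ, Finsupp.single (σ.erase v) ((esgn v σ : ℤ) : k)

/-- The (reduced) simplicial boundary operator. -/
def bdry : Ch k →ₗ[k] Ch k :=
  Finsupp.lsum k fun σ => LinearMap.toSpanSingleton k (Ch k) (bd k σ)

/-- `coeffSign k v σ` is the coefficient of `σ \ {v}` in `∂σ`,
i.e. the sign `(-1)^{v,σ}` of the paper. -/
def coeffSign (v : Fin 3) (σ : Finset (Fin 3)) : k :=
  bdry k (Finsupp.single σ (1:k)) (σ.erase v)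

/-- Faces of cardinality `c` (dimension `c-1`) of a simplicial complex. -/
def faces (Kc : Set (Finset (Fin 3))) (c : ℕ) : Set (Finset (Fin 3)) :=
  {σ | σ ∈ Kc ∧ σ.card = c}

/-- Basis chains attached to a set of faces. -/
def sset (A : Set (Finset (Fin 3))) : Set (Ch k) :=
  (fun σ => Finsupp.single σ (1:k)) '' A

/-- The chain group `C̃_{c-1}(K;k)`, as the span of its card-`c` faces. -/
def chains (Kc : Set (Finset (Fin 3))) (c : ℕ) : Submodule k (Ch k) :=
  Submodule.span k (sset k (faces Kc c))

/-- The boundaries `B̃_{c-1}(K;k) = ∂ C̃_c(K;k)`, sitting among card-`c` chains. -/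
def bdries (Kc : Set (Finset (Fin 3))) (c : ℕ) : Submodule k (Ch k) :=
  (chains k Kc (c+1)).map (bdry k)

/-- A shrubbery in dimension `c-1` (faces of cardinality `c`): a set `T` of card-`c`
faces whose boundaries form a basis of `∂ C̃_{c-1}(K;k)`. -/
def IsShrubbery (Kc : Set (Finset (Fin 3))) (c : ℕ) (T : Finset (Finset (Fin 3))) : Prop :=
  (T : Set (Finset (Fin 3))) ⊆ faces Kc c ∧
  LinearIndependent k
    (fun σ : (T : Set (Finset (Fin 3))) => bdry k (Finsupp.single (σ : Finset (Fin 3)) (1:k))) ∧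
  Submodule.span k ((fun σ => bdry k (Finsupp.single σ (1:k))) '' (T : Set (Finset (Fin 3)))) =
    (chains k Kc c).map (bdry k)

/-- A stake set in dimension `c-1` (faces of cardinality `c`): a set `S` of card-`c`
faces whose complement maps to a basis of `C̃/B̃`. -/
def IsStakeSet (Kc : Set (Finset (Fin 3))) (c : ℕ) (S : Finset (Finset (Fin 3))) : Prop :=
  (S : Set (Finset (Fin 3))) ⊆ faces Kc c ∧
  Submodule.span k (sset k (faces Kc c \ (S : Set (Finset (Fin 3))))) ⊓ bdries k Kc c = ⊥ ∧
  Submodule.span k (sset k (faces Kc c \ (S : Set (Finset (Fin 3))))) ⊔ bdries k Kc c =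
    chains k Kc c

/-- The circuit `ζ(τ)` of a face `τ` with respect to a shrubbery `T`:
the unique cycle of the form `τ - t` with `t ∈ span T`. -/
def circuit (T : Finset (Finset (Fin 3))) (τ : Finset (Fin 3)) : Ch k :=
  if h : ∃! z : Ch k, bdry k z = 0 ∧
      Finsupp.single τ (1:k) - z ∈ Submodule.span k (sset k (T : Set (Finset (Fin 3))))
  then h.exists.choose else 0

/-- The shrub `s(σ)` of a stake `σ` with respect to a hedge `(S,T)`:
the unique chain in `span T` whose boundary has coefficient `1` on `σ` and `0`
on all other stakes. -/
def shrub (S T : Finset (Finset (Fin 3))) (σ : Finset (Fin 3)) : Ch k :=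
  if h : ∃! s : Ch k, s ∈ Submodule.span k (sset k (T : Set (Finset (Fin 3)))) ∧
      bdry k s σ = 1 ∧ ∀ σ' ∈ S, σ' ≠ σ → bdry k s σ' = 0
  then h.exists.choose else 0

/-- The hedge rim `r(τ)` of a face `τ` with respect to a stake set `S`:
the unique chain supported outside `S` with `τ - r(τ)` a boundary. -/
def hedgeRim (Kc : Set (Finset (Fin 3))) (c : ℕ) (S : Finset (Finset (Fin 3)))
    (τ : Finset (Fin 3)) : Ch k :=
  if h : ∃! r : Ch k,
      r ∈ Submodule.span k (sset k (faces Kc c \ (S : Set (Finset (Fin 3))))) ∧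
      Finsupp.single τ (1:k) - r ∈ bdries k Kc c
  then h.exists.choose else 0

/-- The points of the saturated decreasing lattice path from `pt a d n` down to `a`
encoded by the list of directions `d` (read from `a` upwards). -/
def pt (a : V3) {n : ℕ} (d : Fin n → Fin 3) (m : ℕ) : V3 :=
  fun i => a i + ∑ m' ∈ Finset.range m, (if h : m' < n then stdVec (d ⟨m', h⟩) i else 0)

/-- The data of a hedgerow: `(Sb, S, T, Ta)`. -/
abbrev HRData (n : ℕ) :=
  Finset (Finset (Fin 3)) × (Fin (n+1) → Finset (Finset (Fin 3))) ×
    (Fin (n+1) → Finset (Finset (Fin 3))) × Finset (Finset (Fin 3))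

/-- A hedgerow in homological dimension `c-1` along the lattice path from `pt a d n`
down to `a`: a stake set in the Koszul complex at the top, a hedge at each interior
lattice point, and a shrubbery at the bottom.  (Unused components are pinned to `∅`.) -/
def IsHedgerow (I : Set V3) (a : V3) {n : ℕ} (d : Fin n → Fin 3) (c : ℕ)
    (h : HRData n) : Prop :=
  IsStakeSet k (K I (pt a d n)) c h.1 ∧
  (∀ m : Fin (n+1), 0 < (m:ℕ) → (m:ℕ) < n →
    IsStakeSet k (K I (pt a d m)) (c-1) (h.2.1 m) ∧
    IsShrubbery k (K I (pt a d m)) c (h.2.2.1 m)) ∧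
  (∀ m : Fin (n+1), ((m:ℕ) = 0 ∨ (m:ℕ) = n) → h.2.1 m = ∅ ∧ h.2.2.1 m = ∅) ∧
  IsShrubbery k (K I a) (c-1) h.2.2.2

/-- `Δ_{c-1,λ} I`: the number of hedgerows along the lattice path. -/
def Delta (I : Set V3) (a : V3) {n : ℕ} (d : Fin n → Fin 3) (c : ℕ) : ℕ :=
  Nat.card {h : HRData n // IsHedgerow k I a d c h}

/-- The data of a chain-link fence: a hedgerow together with the faces `τ_ℓ` and
`σ_ℓ` (indexed here by the lattice point `pt a d m`, so `τ_ℓ = tau (n-ℓ)` and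
`σ_ℓ = sig (n-ℓ)`). -/
abbrev FData (n : ℕ) :=
  HRData n × (Fin (n+1) → Finset (Fin 3)) × (Fin (n+1) → Finset (Fin 3))

/-- A chain-link fence from the card-`c` face `τtop` of the Koszul complex at the top
of the lattice path to the card-`(c-1)` face `σbot` of the Koszul complex at the
bottom. -/
def IsFence (I : Set V3) (a : V3) {n : ℕ} (d : Fin n → Fin 3) (c : ℕ)
    (σbot τtop : Finset (Fin 3)) (f : FData n) : Prop :=
  IsHedgerow k I a d c f.1 ∧
  (∀ m : Fin (n+1), 0 < (m:ℕ) → f.2.1 m ∈ faces (K I (pt a d m)) c) ∧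
  (∀ m : Fin (n+1), (m:ℕ) < n → f.2.2 m ∈ faces (K I (pt a d m)) (c-1)) ∧
  f.2.1 0 = ∅ ∧ f.2.2 (Fin.last n) = ∅ ∧
  hedgeRim k (K I (pt a d n)) c f.1.1 τtop (f.2.1 (Fin.last n)) ≠ 0 ∧
  (∀ m : Fin n, f.2.2 m.castSucc = (f.2.1 m.succ).erase (d m)) ∧
  (∀ m : Fin (n+1), 0 < (m:ℕ) → (m:ℕ) < n →
    f.2.2 m ∈ f.1.2.1 m ∧
    shrub k (f.1.2.1 m) (f.1.2.2.1 m) (f.2.2 m) (f.2.1 m) ≠ 0) ∧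
  circuit k f.1.2.2.2 (f.2.2 0) σbot ≠ 0

/-- The weight of a chain-link fence: the product of the boundary-link coefficient,
the chain-link coefficients, the containment coefficients, and the cycle-link
coefficient. -/
def weight (I : Set V3) (a : V3) {n : ℕ} (d : Fin n → Fin 3) (c : ℕ)
    (σbot τtop : Finset (Fin 3)) (f : FData n) : k :=
  hedgeRim k (K I (pt a d n)) c f.1.1 τtop (f.2.1 (Fin.last n)) *
  (∏ m : Fin (n+1), if 0 < (m:ℕ) ∧ (m:ℕ) < n
      then shrub k (f.1.2.1 m) (f.1.2.2.1 m) (f.2.2 m) (f.2.1 m) else 1) *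
  (∏ m : Fin n, bdry k (Finsupp.single (f.2.1 m.succ) (1:k)) (f.2.2 m.castSucc)) *
  circuit k f.1.2.2.2 (f.2.2 0) σbot

/-- `D_{σ,τ}^{a,b,λ}`: the contribution of the single lattice path `λ` (encoded by
its direction sequence `d`) to the canonical sylvan matrix entry. -/
def Dpath (I : Set V3) (a : V3) {n : ℕ} (d : Fin n → Fin 3) (c : ℕ)
    (σbot τtop : Finset (Fin 3)) : k :=
  ((Delta k I a d c : k))⁻¹ *
    ∑ᶠ f ∈ {f : FData n | IsFence k I a d c σbot τtop f}, weight k I a d c σbot τtop f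

/-- `|b - a|`, the common length of all saturated decreasing lattice paths. -/
def nlen (a b : V3) : ℕ := ∑ i, (b i - a i)

/-- The canonical sylvan matrix entry `D_{σ,τ}^{a,b}`: a sum over all saturated
decreasing lattice paths from `b` to `a`. -/
def D (I : Set V3) (a b : V3) (c : ℕ) (σbot τtop : Finset (Fin 3)) : k :=
  ∑ᶠ d ∈ {d : Fin (nlen a b) → Fin 3 | pt a d (nlen a b) = b},
    Dpath k I a d c σbot τtop

/-- `K` has exactly the set `F` as facets, i.e. it is the downward closure of `F`. -/
def hasFacets (Kc F : Set (Finset (Fin 3))) : Prop :=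
  Kc = {σ | ∃ f ∈ F, σ ⊆ f}

/-- `dim_k H̃₀(K;k) ≠ 0`: some reduced 0-cycle is not a boundary. -/
def H0nontrivial (Kc : Set (Finset (Fin 3))) : Prop :=
  ¬ (chains k Kc 1 ⊓ LinearMap.ker (bdry k) ≤ bdries k Kc 1)


section Helpers

variable {k : Type} [Field k]

lemma mem_span_sset {A : Set (Finset (Fin 3))} {z : Ch k}
    (hz : z ∈ Submodule.span k (sset k A)) {σ : Finset (Fin 3)} (hσ : σ ∉ A) : z σ = 0 := by
  induction hz using Submodule.span_induction with
  | mem x hx =>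
    obtain ⟨τ, hτ, rfl⟩ := hx
    exact Finsupp.single_eq_of_ne (fun h => hσ (h ▸ hτ))
  | zero => simp
  | add x y _ _ hx hy => simp [hx, hy]
  | smul c x _ hx => simp [hx]

lemma single_mem_span_sset {A : Set (Finset (Fin 3))} {τ : Finset (Fin 3)} (h : τ ∈ A) :
    Finsupp.single τ (1:k) ∈ Submodule.span k (sset k A) :=
  Submodule.subset_span ⟨τ, h, rfl⟩

lemma bdry_single (σ : Finset (Fin 3)) (x : k) :
    bdry k (Finsupp.single σ x) = x • bd k σ := by
  simp [bdry, LinearMap.toSpanSingleton_apply]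

lemma bdry_single_one (σ : Finset (Fin 3)) :
    bdry k (Finsupp.single σ (1:k)) = bd k σ := by
  simp [bdry_single]

lemma bd_apply_erase {u : Fin 3} {σ : Finset (Fin 3)} (h : u ∈ σ) :
    bd k σ (σ.erase u) = ((esgn u σ : ℤ) : k) := by
  rw [bd, Finset.sum_apply']
  rw [Finset.sum_eq_single u]
  · simp
  · intro v hv hvu
    exact Finsupp.single_eq_of_ne' (fun he => hvu ((Finset.erase_inj σ hv).mp he))
  · exact fun h' => absurd h h'

lemma bd_vertex (v : Fin 3) : bd k {v} = Finsupp.single ∅ (1:k) := by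
  have h1 : esgn v {v} = 1 := by
    revert v; decide
  simp [bd, h1]

lemma coeffSign_eq {u : Fin 3} {σ : Finset (Fin 3)} (h : u ∈ σ) :
    coeffSign k u σ = ((esgn u σ : ℤ) : k) := by
  rw [coeffSign, bdry_single_one, bd_apply_erase h]

lemma esgn_pair : ∀ u v : Fin 3, u ≠ v → esgn u {u,v} = -esgn v {u,v} := by decide

lemma coeffSign_pair (u v : Fin 3) (h : u ≠ v) :
    coeffSign k u {u,v} = - coeffSign k v {u,v} := by
  rw [coeffSign_eq (by simp), coeffSign_eq (by simp), esgn_pair u v h]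
  push_cast
  ring

end Helpers

section Struct

variable {k : Type} [Field k]

lemma faces_top {I : Set V3} {b : V3} {i j l : Fin 3} (hij : i ≠ j) (hil : i ≠ l) (hjl : j ≠ l)
    (hKb : hasFacets (K I b) {{i, j}, {i, l}, {j, l}}) :
    faces (K I b) 2 = {{i, j}, {i, l}, {j, l}} := by
  ext σ
  rw [faces, hKb]
  constructor
  · rintro ⟨⟨f, hf, hsub⟩, hcard⟩
    have hc2 : f.card = 2 := by
      rcases hf with rfl | rfl | rfl
      · exact Finset.card_pair hij
      · exact Finset.card_pair hil
      · exact Finset.card_pair hjl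
    have : σ = f := Finset.eq_of_subset_of_card_le hsub (by omega)
    subst this; exact hf
  · rintro h
    refine ⟨⟨σ, h, subset_rfl⟩, ?_⟩
    rcases h with rfl | rfl | rfl
    · exact Finset.card_pair hij
    · exact Finset.card_pair hil
    · exact Finset.card_pair hjl

lemma faces_top3 {I : Set V3} {b : V3} {i j l : Fin 3} (hij : i ≠ j) (hil : i ≠ l) (hjl : j ≠ l)
    (hKb : hasFacets (K I b) {{i, j}, {i, l}, {j, l}}) :
    faces (K I b) 3 = ∅ := by
  ext σ
  rw [faces, hKb]
  simp only [Set.mem_empty_iff_false, iff_false]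
  rintro ⟨⟨f, hf, hsub⟩, hcard⟩
  have hc2 : f.card = 2 := by
    rcases hf with rfl | rfl | rfl
    · exact Finset.card_pair hij
    · exact Finset.card_pair hil
    · exact Finset.card_pair hjl
  have := Finset.card_le_card hsub
  omega

lemma faces_bot {I : Set V3} {a : V3} {j l : Fin 3}
    (hKa : hasFacets (K I a) {{j}, {l}}) :
    faces (K I a) 1 = {{j}, {l}} := by
  ext σ
  rw [faces, hKa]
  constructor
  · rintro ⟨⟨f, hf, hsub⟩, hcard⟩
    have hc2 : f.card = 1 := by
      rcases hf with rfl | rfl <;> exact Finset.card_singleton _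
    have : σ = f := Finset.eq_of_subset_of_card_le hsub (by omega)
    subst this; exact hf
  · rintro h
    refine ⟨⟨σ, h, subset_rfl⟩, ?_⟩
    rcases h with rfl | rfl <;> exact Finset.card_singleton _

lemma faces_bot2 {I : Set V3} {a : V3} {j l : Fin 3}
    (hKa : hasFacets (K I a) {{j}, {l}}) :
    faces (K I a) 2 = ∅ := by
  ext σ
  rw [faces, hKa]
  simp only [Set.mem_empty_iff_false, iff_false]
  rintro ⟨⟨f, hf, hsub⟩, hcard⟩
  have hc2 : f.card = 1 := by
    rcases hf with rfl | rfl <;> exact Finset.card_singleton _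
  have := Finset.card_le_card hsub
  omega

lemma bdries_top {I : Set V3} {b : V3} {i j l : Fin 3} (hij : i ≠ j) (hil : i ≠ l) (hjl : j ≠ l)
    (hKb : hasFacets (K I b) {{i, j}, {i, l}, {j, l}}) :
    bdries k (K I b) 2 = ⊥ := by
  rw [bdries, chains, faces_top3 hij hil hjl hKb]
  simp [sset]

lemma bdries_bot {I : Set V3} {a : V3} {j l : Fin 3}
    (hKa : hasFacets (K I a) {{j}, {l}}) :
    bdries k (K I a) 1 = ⊥ := by
  rw [bdries, chains, faces_bot2 hKa]
  simp [sset]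

end Struct

section Class

variable {k : Type} [Field k]

lemma single_empty_ne_zero : Finsupp.single (∅ : Finset (Fin 3)) (1:k) ≠ 0 := by
  intro h
  have := Finsupp.single_eq_zero.mp h
  simp at this

lemma stake_top {I : Set V3} {b : V3} {i j l : Fin 3} (hij : i ≠ j) (hil : i ≠ l) (hjl : j ≠ l)
    (hKb : hasFacets (K I b) {{i, j}, {i, l}, {j, l}}) (S : Finset (Finset (Fin 3))) :
    IsStakeSet k (K I b) 2 S ↔ S = ∅ := by
  have hbd : bdries k (K I b) 2 = (⊥ : Submodule k (Ch k)) := bdries_top hij hil hjl hKb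
  constructor
  · rintro ⟨hsub, _, hsup⟩
    rw [hbd, sup_bot_eq] at hsup
    by_contra hS
    obtain ⟨σ, hσ⟩ := Finset.nonempty_iff_ne_empty.mpr hS
    have hσf : σ ∈ faces (K I b) 2 := hsub hσ
    have h1 : Finsupp.single σ (1:k) ∈ chains k (K I b) 2 := single_mem_span_sset hσf
    rw [← hsup] at h1
    have h0 := mem_span_sset h1 (σ := σ) (by simp [hσ])
    simp at h0
  · rintro rfl
    refine ⟨by simp, ?_, ?_⟩
    · rw [hbd, inf_bot_eq]
    · rw [hbd, sup_bot_eq, chains]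
      simp

lemma shrub_single (Kc : Set (Finset (Fin 3))) (v : Fin 3)
    (hv : {v} ∈ faces Kc 1)
    (hrhs : (chains k Kc 1).map (bdry k)
      = Submodule.span k {Finsupp.single (∅ : Finset (Fin 3)) (1:k)}) :
    IsShrubbery k Kc 1 ({{v}} : Finset (Finset (Fin 3))) := by
  have hvert : ∀ w : Fin 3, bdry k (Finsupp.single ({w} : Finset (Fin 3)) (1:k))
      = Finsupp.single ∅ (1:k) := fun w => by rw [bdry_single_one, bd_vertex]
  refine ⟨by rw [Finset.coe_singleton, Set.singleton_subset_iff]; exact hv, ?_, ?_⟩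
  · letI : Unique ((({{v}} : Finset (Finset (Fin 3))) : Set (Finset (Fin 3)))) :=
      ⟨⟨⟨{v}, by simp⟩⟩, by rintro ⟨x, hx⟩; simp only [Finset.coe_singleton,
        Set.mem_singleton_iff] at hx; subst hx; rfl⟩
    apply LinearIndependent.of_subsingleton default
    show bdry k (Finsupp.single ({v} : Finset (Fin 3)) (1:k)) ≠ 0
    rw [hvert]
    exact single_empty_ne_zero
  · simp only [Finset.coe_singleton, Set.image_singleton, hvert, hrhs]

lemma shrub_bot {I : Set V3} {a : V3} {j l : Fin 3} (hjl : j ≠ l)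
    (hKa : hasFacets (K I a) {{j}, {l}}) (T : Finset (Finset (Fin 3))) :
    IsShrubbery k (K I a) 1 T ↔ T = {{j}} ∨ T = {{l}} := by
  have hfa : faces (K I a) 1 = {{j}, {l}} := faces_bot hKa
  have hvert : ∀ v : Fin 3, bdry k (Finsupp.single ({v} : Finset (Fin 3)) (1:k))
      = Finsupp.single ∅ (1:k) := fun v => by rw [bdry_single_one, bd_vertex]
  have hrhs : (chains k (K I a) 1).map (bdry k)
      = Submodule.span k {Finsupp.single (∅ : Finset (Fin 3)) (1:k)} := by
    rw [chains, hfa, Submodule.map_span]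
    congr 1
    rw [sset, Set.image_insert_eq, Set.image_singleton, Set.image_insert_eq,
      Set.image_singleton, hvert, hvert]
    simp
  constructor
  · rintro ⟨hsub, hli, hspan⟩
    rw [hfa] at hsub
    have hjmem : {j} ∈ T ∨ {l} ∈ T := by
      by_contra hc
      push_neg at hc
      obtain ⟨h1, h2⟩ := hc
      have hT : T = ∅ := by
        rw [Finset.eq_empty_iff_forall_notMem]
        intro x hx
        rcases hsub hx with h | h
        · exact h1 (h ▸ hx)
        · exact h2 (h ▸ hx)
      subst hT
      simp only [Finset.coe_empty, Set.image_empty, Submodule.span_empty] at hspan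
      rw [hrhs] at hspan
      have := hspan ▸ Submodule.mem_span_singleton_self
        (Finsupp.single (∅ : Finset (Fin 3)) (1:k))
      rw [Submodule.mem_bot] at this
      exact single_empty_ne_zero this
    have hnotboth : ¬ ({j} ∈ T ∧ {l} ∈ T) := by
      rintro ⟨h1, h2⟩
      have hinj := hli.injective
      have heq : (⟨{j}, h1⟩ : (T : Set (Finset (Fin 3)))) = ⟨{l}, h2⟩ := by
        apply hinj
        show bdry k (Finsupp.single ({j} : Finset (Fin 3)) (1:k))
          = bdry k (Finsupp.single ({l} : Finset (Fin 3)) (1:k))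
        rw [hvert, hvert]
      have : ({j} : Finset (Fin 3)) = {l} := congrArg Subtype.val heq
      exact hjl (Finset.singleton_injective this)
    rcases hjmem with hm | hm
    · left
      apply Finset.Subset.antisymm
      · intro x hx
        rcases hsub hx with h | h
        · simp [h]
        · exact absurd ⟨hm, h ▸ hx⟩ hnotboth
      · simpa using hm
    · right
      apply Finset.Subset.antisymm
      · intro x hx
        rcases hsub hx with h | h
        · exact absurd ⟨h ▸ hx, hm⟩ hnotboth
        · simpa using h
      · simpa using hm
  · rintro (rfl | rfl)
    · exact shrub_single _ j (by rw [hfa]; simp) hrhs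
    · exact shrub_single _ l (by rw [hfa]; simp) hrhs

end Class

section Path

variable {k : Type} [Field k]

lemma pt_zero (a : V3) {n : ℕ} (d : Fin n → Fin 3) : pt a d 0 = a := by
  funext q; simp [pt]

lemma pt_one (a : V3) (d : Fin 1 → Fin 3) : pt a d 1 = fun q => a q + stdVec (d 0) q := by
  funext q
  simp [pt, Finset.sum_range_one]

lemma stdVec_inj {u v : Fin 3} (h : stdVec u = stdVec v) : u = v := by
  by_contra hne
  have := congrFun h u
  simp [stdVec, hne] at this

lemma path_set (a b : V3) (i : Fin 3) (hB : ∀ q, b q = a q + stdVec i q) :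
    {d : Fin 1 → Fin 3 | pt a d 1 = b} = {fun _ => i} := by
  ext d
  simp only [Set.mem_setOf_eq, Set.mem_singleton_iff]
  constructor
  · intro h
    have h0 : d 0 = i := by
      apply stdVec_inj
      funext q
      have h1 : a q + stdVec (d 0) q = a q + stdVec i q := by
        have h2 := congrFun h q
        rw [pt_one] at h2
        simpa [hB q] using h2
      omega
    funext m
    have : m = 0 := Subsingleton.elim m 0
    rw [this, h0]
  · rintro rfl
    rw [pt_one]
    funext q
    rw [hB q]

end Path

section Hedgerow

variable {k : Type} [Field k]

/-- The two hedgerows. -/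
def HR (T : Finset (Finset (Fin 3))) : HRData 1 :=
  (∅, fun _ => ∅, fun _ => ∅, T)

lemma hedgerow_iff {I : Set V3} {a b : V3} {i j l : Fin 3}
    (hij : i ≠ j) (hil : i ≠ l) (hjl : j ≠ l)
    (hKb : hasFacets (K I b) {{i, j}, {i, l}, {j, l}})
    (hKa : hasFacets (K I a) {{j}, {l}})
    {d : Fin 1 → Fin 3} (hpt : pt a d 1 = b) (h : HRData 1) :
    IsHedgerow k I a d 2 h ↔ h = HR {{j}} ∨ h = HR {{l}} := by
  obtain ⟨S, f, g, T⟩ := h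
  constructor
  · rintro ⟨hS, _, hpin, hT⟩
    rw [hpt, stake_top hij hil hjl hKb] at hS
    have hf : f = fun _ => ∅ := by
      funext m
      exact (hpin m (by omega)).1
    have hg : g = fun _ => ∅ := by
      funext m
      exact (hpin m (by omega)).2
    rw [shrub_bot hjl hKa] at hT
    rcases hT with rfl | rfl
    · left; simp only [HR, Prod.mk.injEq]; exact ⟨hS, hf, hg, trivial⟩
    · right; simp only [HR, Prod.mk.injEq]; exact ⟨hS, hf, hg, trivial⟩
  · rintro (heq | heq) <;> rw [show (⟨S, f, g, T⟩ : HRData 1) = _ from heq] <;>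
      refine ⟨?_, fun m h1 h2 => absurd h2 (by omega), fun m _ => ⟨rfl, rfl⟩, ?_⟩
    · rw [hpt]; exact (stake_top hij hil hjl hKb _).mpr rfl
    · exact (shrub_bot hjl hKa _).mpr (Or.inl rfl)
    · rw [hpt]; exact (stake_top hij hil hjl hKb _).mpr rfl
    · exact (shrub_bot hjl hKa _).mpr (Or.inr rfl)

lemma delta_eq_two {I : Set V3} {a b : V3} {i j l : Fin 3}
    (hij : i ≠ j) (hil : i ≠ l) (hjl : j ≠ l)
    (hKb : hasFacets (K I b) {{i, j}, {i, l}, {j, l}})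
    (hKa : hasFacets (K I a) {{j}, {l}})
    {d : Fin 1 → Fin 3} (hpt : pt a d 1 = b) :
    Delta k I a d 2 = 2 := by
  have hset : {h : HRData 1 | IsHedgerow k I a d 2 h} = {HR {{j}}, HR {{l}}} :=
    Set.ext fun h => hedgerow_iff hij hil hjl hKb hKa hpt h
  have hne : HR {{j}} ≠ HR {{l}} := by
    intro hc
    have := congrArg (fun x => x.2.2.2) hc
    simp only [HR] at this
    exact hjl (Finset.singleton_injective (Finset.singleton_injective this))
  rw [Delta]
  have : {h : HRData 1 // IsHedgerow k I a d 2 h} = ↥{h : HRData 1 | IsHedgerow k I a d 2 h} := rfl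
  rw [this, hset, Nat.card_coe_set_eq, Set.ncard_pair hne]

end Hedgerow

section RimCircuit

variable {k : Type} [Field k]

lemma hedgeRim_top {I : Set V3} {b : V3} {i j l : Fin 3}
    (hij : i ≠ j) (hil : i ≠ l) (hjl : j ≠ l)
    (hKb : hasFacets (K I b) {{i, j}, {i, l}, {j, l}})
    {τ : Finset (Fin 3)} (hτ : τ ∈ faces (K I b) 2) :
    hedgeRim k (K I b) 2 (∅ : Finset (Finset (Fin 3))) τ = Finsupp.single τ (1:k) := by
  have hbd : bdries k (K I b) 2 = (⊥ : Submodule k (Ch k)) := bdries_top hij hil hjl hKb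
  have hp : (Finsupp.single τ (1:k)) ∈ Submodule.span k
      (sset k (faces (K I b) 2 \ ((∅ : Finset (Finset (Fin 3))) : Set (Finset (Fin 3))))) ∧
      Finsupp.single τ (1:k) - Finsupp.single τ (1:k) ∈ bdries k (K I b) 2 := by
    constructor
    · apply single_mem_span_sset
      simp [hτ]
    · rw [hbd]; simp
  have h : ∃! r : Ch k,
      r ∈ Submodule.span k (sset k (faces (K I b) 2 \ ((∅ : Finset (Finset (Fin 3))) : Set (Finset (Fin 3))))) ∧
      Finsupp.single τ (1:k) - r ∈ bdries k (K I b) 2 := by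
    refine ⟨Finsupp.single τ (1:k), hp, ?_⟩
    rintro r ⟨_, hr2⟩
    rw [hbd, Submodule.mem_bot, sub_eq_zero] at hr2
    exact hr2.symm
  rw [hedgeRim, dif_pos h]
  exact h.unique h.exists.choose_spec hp

lemma circuit_vertex (x y : Fin 3) :
    circuit k ({{x}} : Finset (Finset (Fin 3))) {y}
      = Finsupp.single ({y} : Finset (Fin 3)) (1:k) - Finsupp.single ({x} : Finset (Fin 3)) (1:k) := by
  have hspan : Submodule.span k (sset k (({{x}} : Finset (Finset (Fin 3))) : Set (Finset (Fin 3))))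
      = Submodule.span k {Finsupp.single ({x} : Finset (Fin 3)) (1:k)} := by
    congr 1
    simp [sset]
  have hb0 : bdry k (Finsupp.single ({y} : Finset (Fin 3)) (1:k)
      - Finsupp.single ({x} : Finset (Fin 3)) (1:k)) = 0 := by
    rw [map_sub, bdry_single_one, bdry_single_one, bd_vertex, bd_vertex, sub_self]
  have hp : bdry k (Finsupp.single ({y} : Finset (Fin 3)) (1:k)
        - Finsupp.single ({x} : Finset (Fin 3)) (1:k)) = 0 ∧
      Finsupp.single ({y} : Finset (Fin 3)) (1:k) -
        (Finsupp.single ({y} : Finset (Fin 3)) (1:k) - Finsupp.single ({x} : Finset (Fin 3)) (1:k))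
        ∈ Submodule.span k (sset k (({{x}} : Finset (Finset (Fin 3))) : Set (Finset (Fin 3)))) := by
    refine ⟨hb0, ?_⟩
    rw [sub_sub_cancel, hspan]
    exact Submodule.mem_span_singleton_self _
  have h : ∃! z : Ch k, bdry k z = 0 ∧
      Finsupp.single ({y} : Finset (Fin 3)) (1:k) - z ∈
        Submodule.span k (sset k (({{x}} : Finset (Finset (Fin 3))) : Set (Finset (Fin 3)))) := by
    refine ⟨_, hp, ?_⟩
    rintro z ⟨hz1, hz2⟩
    rw [hspan, Submodule.mem_span_singleton] at hz2
    obtain ⟨c, hc⟩ := hz2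
    have hz : z = Finsupp.single ({y} : Finset (Fin 3)) (1:k)
        - c • Finsupp.single ({x} : Finset (Fin 3)) (1:k) := by
      rw [hc]; exact (sub_sub_cancel _ _).symm
    rw [hz] at hz1
    rw [map_sub, map_smul, bdry_single_one, bdry_single_one, bd_vertex, bd_vertex] at hz1
    have hc1 : (1:k) - c = 0 := by
      have := congrFun (congrArg (fun z : Ch k => (z : Finset (Fin 3) → k)) hz1) ∅
      simpa [Finsupp.sub_apply] using this
    have : c = 1 := (sub_eq_zero.mp hc1).symm
    rw [hz, this, one_smul]
  rw [circuit, dif_pos h]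
  exact h.unique h.exists.choose_spec hp

end RimCircuit

section Fence

variable {k : Type} [Field k]

/-- The unique fence. -/
def FStar (T : Finset (Finset (Fin 3))) (σ0 τtop : Finset (Fin 3)) : FData 1 :=
  (HR T, fun m => if m = 0 then ∅ else τtop, fun m => if m = 0 then σ0 else ∅)

lemma fin2_last : Fin.last 1 = (1 : Fin 2) := rfl

lemma fence_set_eq {I : Set V3} {a b : V3} {i j l : Fin 3}
    (hij : i ≠ j) (hil : i ≠ l) (hjl : j ≠ l)
    (hKb : hasFacets (K I b) {{i, j}, {i, l}, {j, l}})
    (hKa : hasFacets (K I a) {{j}, {l}})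
    (hpt : pt a (fun _ : Fin 1 => i) 1 = b)
    {τtop σ0 : Finset (Fin 3)} (hτf : τtop ∈ faces (K I b) 2)
    (her : τtop.erase i = σ0) (hσ0 : σ0 ∈ faces (K I a) 1)
    {Tst : Finset (Finset (Fin 3))} (hTst : Tst = {{j}} ∨ Tst = {{l}})
    (σbot : Finset (Fin 3))
    (hcirc : circuit k Tst σ0 σbot ≠ 0)
    (hother : ∀ T' : Finset (Finset (Fin 3)), (T' = {{j}} ∨ T' = {{l}}) →
      circuit k T' σ0 σbot ≠ 0 → T' = Tst) :
    {f : FData 1 | IsFence k I a (fun _ => i) 2 σbot τtop f} = {FStar Tst σ0 τtop} := by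
  ext f
  simp only [Set.mem_setOf_eq, Set.mem_singleton_iff]
  constructor
  · rintro ⟨hhr, hτmem, hσmem, hτ0, hσlast, hrim, herase, hmid, hcirc'⟩
    have hf1or := (hedgerow_iff hij hil hjl hKb hKa hpt f.1).mp hhr
    have hf11 : f.1.1 = ∅ := by rcases hf1or with h | h <;> rw [h] <;> rfl
    have hf21 : f.2.1 (Fin.last 1) = τtop := by
      rw [hpt, hf11] at hrim
      rw [hedgeRim_top hij hil hjl hKb hτf] at hrim
      by_contra hne
      exact hrim (Finsupp.single_eq_of_ne' (fun h => hne h.symm))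
    have hf220 : f.2.2 0 = σ0 := by
      have h0 := herase 0
      rw [show (0 : Fin 1).castSucc = 0 from rfl, show (0 : Fin 1).succ = 1 from rfl] at h0
      rw [h0, show f.2.1 1 = τtop from hf21, her]
    have hTval : f.1.2.2.2 = Tst := by
      apply hother
      · rcases hf1or with h | h <;> rw [h]
        · left; rfl
        · right; rfl
      · rw [← hf220]; exact hcirc'
    have hf1 : f.1 = HR Tst := by
      rcases hf1or with h | h <;> rw [h] <;> rw [h] at hTval <;>
        simp only [HR] at hTval ⊢ <;> rw [hTval]
    obtain ⟨fh, ft, fs⟩ := f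
    simp only at hf1 hτ0 hσlast hf21 hf220
    simp only [FStar, Prod.mk.injEq]
    refine ⟨hf1, ?_, ?_⟩
    · funext m
      fin_cases m
      · simpa using hτ0
      · simpa using hf21
    · funext m
      fin_cases m
      · simpa using hf220
      · simpa using hσlast
  · rintro rfl
    refine ⟨?_, ?_, ?_, ?_, ?_, ?_, ?_, ?_, ?_⟩
    · apply (hedgerow_iff hij hil hjl hKb hKa hpt _).mpr
      rcases hTst with rfl | rfl
      · exact Or.inl rfl
      · exact Or.inr rfl
    · intro m hm
      have hm1 : m = 1 := by
        have h2 : (m:ℕ) < 2 := m.isLt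
        have h1 : ((1 : Fin (1+1)) : ℕ) = 1 := rfl
        apply Fin.ext; rw [h1]; omega
      subst hm1
      show (if (1 : Fin 2) = 0 then ∅ else τtop) ∈ _
      rw [if_neg (by decide)]
      have : ((1 : Fin 2) : ℕ) = 1 := rfl
      rw [this, hpt]
      exact hτf
    · intro m hm
      have hm0 : m = 0 := by
        have h2 : (m:ℕ) < 2 := m.isLt
        have h1 : ((0 : Fin (1+1)) : ℕ) = 0 := rfl
        apply Fin.ext; rw [h1]; omega
      subst hm0
      show (if (0 : Fin 2) = 0 then σ0 else ∅) ∈ _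
      rw [if_pos rfl]
      have : ((0 : Fin 2) : ℕ) = 0 := rfl
      rw [this, pt_zero]
      exact hσ0
    · show (if (0 : Fin 2) = 0 then ∅ else τtop) = ∅
      rw [if_pos rfl]
    · show (if (Fin.last 1) = 0 then σ0 else ∅) = ∅
      rw [if_neg (by decide)]
    · show hedgeRim k (K I (pt a _ 1)) 2 (HR Tst).1 τtop
        ((if (Fin.last 1) = (0 : Fin 2) then ∅ else τtop)) ≠ 0
      rw [if_neg (by decide), hpt]
      show hedgeRim k (K I b) 2 ∅ τtop τtop ≠ 0
      rw [hedgeRim_top hij hil hjl hKb hτf]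
      simp
    · intro m
      have : m = 0 := Subsingleton.elim m 0
      subst this
      show (if (0 : Fin 1).castSucc = 0 then σ0 else ∅)
        = (if (0 : Fin 1).succ = 0 then ∅ else τtop).erase i
      rw [show (0 : Fin 1).castSucc = 0 from rfl, show (0 : Fin 1).succ = 1 from rfl,
        if_pos rfl, if_neg (by decide), her]
    · intro m h1 h2
      exact absurd h2 (by omega)
    · show circuit k Tst (if (0 : Fin 2) = 0 then σ0 else ∅) σbot ≠ 0
      rw [if_pos rfl]
      exact hcirc

end Fence

section Dcomp

variable {k : Type} [Field k]

lemma weight_fstar {I : Set V3} {a b : V3} {i j l : Fin 3}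
    (hij : i ≠ j) (hil : i ≠ l) (hjl : j ≠ l)
    (hKb : hasFacets (K I b) {{i, j}, {i, l}, {j, l}})
    (hpt : pt a (fun _ : Fin 1 => i) 1 = b)
    {τtop σ0 : Finset (Fin 3)} (hτf : τtop ∈ faces (K I b) 2)
    (Tst : Finset (Finset (Fin 3))) (σbot : Finset (Fin 3)) :
    weight k I a (fun _ : Fin 1 => i) 2 σbot τtop (FStar Tst σ0 τtop)
      = bdry k (Finsupp.single τtop (1:k)) σ0 * circuit k Tst σ0 σbot := by
  rw [weight]
  have e1 : (FStar Tst σ0 τtop).1.1 = ∅ := rfl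
  have e2 : (FStar Tst σ0 τtop).2.1 (Fin.last 1) = τtop := by
    show (if (Fin.last 1) = 0 then ∅ else τtop) = τtop
    rw [if_neg (by decide)]
  have e21 : (FStar Tst σ0 τtop).2.1 ((0 : Fin 1).succ) = τtop := by
    show (if (0 : Fin 1).succ = 0 then ∅ else τtop) = τtop
    rw [if_neg (by decide)]
  have e3 : (FStar Tst σ0 τtop).2.2 (0 : Fin 2) = σ0 := by
    show (if (0 : Fin 2) = 0 then σ0 else ∅) = σ0
    rw [if_pos rfl]
  have e31 : (FStar Tst σ0 τtop).2.2 ((0 : Fin 1).castSucc) = σ0 := by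
    show (if (0 : Fin 1).castSucc = 0 then σ0 else ∅) = σ0
    rw [if_pos (by decide)]
  have eT : (FStar Tst σ0 τtop).1.2.2.2 = Tst := rfl
  rw [e1, e2, eT, hpt]
  rw [hedgeRim_top hij hil hjl hKb hτf, Finsupp.single_eq_same]
  rw [Finset.prod_eq_one (f := fun m : Fin (1+1) =>
    if 0 < (m:ℕ) ∧ (m:ℕ) < 1 then shrub k ((FStar Tst σ0 τtop).1.2.1 m)
      ((FStar Tst σ0 τtop).1.2.2.1 m) ((FStar Tst σ0 τtop).2.2 m) ((FStar Tst σ0 τtop).2.1 m)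
      else 1)
    (fun m _ => if_neg (by rintro ⟨h1, h2⟩; omega))]
  rw [Fin.prod_univ_one, e21, e31, e3]
  ring

lemma D_as_Dpath {I : Set V3} {a b : V3} {i : Fin 3}
    (hB : ∀ q, b q = a q + stdVec i q) (σbot τtop : Finset (Fin 3)) :
    D k I a b 2 σbot τtop = Dpath k I a (fun _ : Fin 1 => i) 2 σbot τtop := by
  have hn : nlen a b = 1 := by
    rw [nlen]
    rw [Finset.sum_congr rfl (fun q _ => by rw [hB q, Nat.add_sub_cancel_left])]
    simp [stdVec.eq_def]
  rw [D]
  generalize hg : nlen a b = n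
  rw [hg] at hn
  subst hn
  rw [path_set a b i hB, finsum_mem_singleton]

lemma Dpath_fstar {I : Set V3} {a b : V3} {i j l : Fin 3}
    (hij : i ≠ j) (hil : i ≠ l) (hjl : j ≠ l)
    (hKb : hasFacets (K I b) {{i, j}, {i, l}, {j, l}})
    (hKa : hasFacets (K I a) {{j}, {l}})
    (hpt : pt a (fun _ : Fin 1 => i) 1 = b)
    {τtop σ0 : Finset (Fin 3)} (hτf : τtop ∈ faces (K I b) 2)
    (her : τtop.erase i = σ0) (hσ0 : σ0 ∈ faces (K I a) 1)
    {Tst : Finset (Finset (Fin 3))} (hTst : Tst = {{j}} ∨ Tst = {{l}})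
    (σbot : Finset (Fin 3))
    (hcirc : circuit k Tst σ0 σbot ≠ 0)
    (hother : ∀ T' : Finset (Finset (Fin 3)), (T' = {{j}} ∨ T' = {{l}}) →
      circuit k T' σ0 σbot ≠ 0 → T' = Tst) :
    Dpath k I a (fun _ : Fin 1 => i) 2 σbot τtop
      = (2:k)⁻¹ * (bdry k (Finsupp.single τtop (1:k)) σ0 * circuit k Tst σ0 σbot) := by
  rw [Dpath, delta_eq_two hij hil hjl hKb hKa hpt,
    fence_set_eq hij hil hjl hKb hKa hpt hτf her hσ0 hTst σbot hcirc hother,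
    finsum_mem_singleton, weight_fstar hij hil hjl hKb hpt hτf Tst σbot]
  norm_num

lemma fence_set_empty {I : Set V3} {a b : V3} {i j l : Fin 3}
    (hij : i ≠ j) (hil : i ≠ l) (hjl : j ≠ l)
    (hKb : hasFacets (K I b) {{i, j}, {i, l}, {j, l}})
    (hKa : hasFacets (K I a) {{j}, {l}})
    (hpt : pt a (fun _ : Fin 1 => i) 1 = b)
    (σbot : Finset (Fin 3)) :
    {f : FData 1 | IsFence k I a (fun _ => i) 2 σbot ({j, l} : Finset (Fin 3)) f} = ∅ := by
  ext f
  simp only [Set.mem_setOf_eq, Set.mem_empty_iff_false, iff_false]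
  rintro ⟨hhr, hτmem, hσmem, hτ0, hσlast, hrim, herase, hmid, hcirc'⟩
  have hτf : ({j, l} : Finset (Fin 3)) ∈ faces (K I b) 2 := by
    rw [faces_top hij hil hjl hKb]; right; right; rfl
  have hf1or := (hedgerow_iff hij hil hjl hKb hKa hpt f.1).mp hhr
  have hf11 : f.1.1 = ∅ := by rcases hf1or with h | h <;> rw [h] <;> rfl
  have hf21 : f.2.1 (Fin.last 1) = {j, l} := by
    rw [hpt, hf11] at hrim
    rw [hedgeRim_top hij hil hjl hKb hτf] at hrim
    by_contra hne
    exact hrim (Finsupp.single_eq_of_ne' (fun h => hne h.symm))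
  have hf220 : f.2.2 0 = {j, l} := by
    have h0 := herase 0
    rw [show (0 : Fin 1).castSucc = 0 from rfl, show (0 : Fin 1).succ = 1 from rfl] at h0
    rw [h0, show f.2.1 1 = ({j,l} : Finset (Fin 3)) from hf21]
    apply Finset.erase_eq_of_notMem
    simp only [Finset.mem_insert, Finset.mem_singleton]
    rintro (h | h)
    · exact hij h
    · exact hil h
  have hmem := hσmem 0 (by norm_num)
  rw [show ((0 : Fin 2) : ℕ) = 0 from rfl, pt_zero, faces_bot hKa, hf220] at hmem
  have hcard : ({j, l} : Finset (Fin 3)).card = 2 := Finset.card_pair hjl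
  rcases hmem with h | h
  · rw [h] at hcard; simp at hcard
  · rw [h] at hcard; simp at hcard

lemma Dpath_zero {I : Set V3} {a b : V3} {i j l : Fin 3}
    (hij : i ≠ j) (hil : i ≠ l) (hjl : j ≠ l)
    (hKb : hasFacets (K I b) {{i, j}, {i, l}, {j, l}})
    (hKa : hasFacets (K I a) {{j}, {l}})
    (hpt : pt a (fun _ : Fin 1 => i) 1 = b)
    (σbot : Finset (Fin 3)) :
    Dpath k I a (fun _ : Fin 1 => i) 2 σbot ({j, l} : Finset (Fin 3)) = 0 := by
  rw [Dpath, fence_set_empty hij hil hjl hKb hKa hpt σbot, finsum_mem_empty, mul_zero]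

end Dcomp


/-- If `a = b - e_i`, `K^b I` is `⟨ij,ik,jk⟩` and `K^a I` is
`⟨j,k⟩`, then the degree-1 sylvan matrix is as displayed. -/
theorem statement7 (k : Type) [Field k] (h2 : (2:k) ≠ 0) (h3 : (3:k) ≠ 0)
    (I : Set V3) (hI : IsMonomialIdeal I) (a b : V3)
    (i j l : Fin 3) (hij : i ≠ j) (hil : i ≠ l) (hjl : j ≠ l)
    (hB : ∀ q, b q = a q + stdVec i q)
    (hKb : hasFacets (K I b) {{i, j}, {i, l}, {j, l}})
    (hKa : hasFacets (K I a) {{j}, {l}}) :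
    D k I a b 2 {j} {i, j} = coeffSign k i {i, j} / 2 ∧
    D k I a b 2 {l} {i, j} = coeffSign k j {i, j} / 2 ∧
    D k I a b 2 {j} {i, l} = coeffSign k l {i, l} / 2 ∧
    D k I a b 2 {l} {i, l} = coeffSign k i {i, l} / 2 ∧
    D k I a b 2 {j} {j, l} = 0 ∧
    D k I a b 2 {l} {j, l} = 0 := by
  have hpt : pt a (fun _ : Fin 1 => i) 1 = b := by
    rw [pt_one]; funext q; exact (hB q).symm
  have herij : ({i, j} : Finset (Fin 3)).erase i = {j} :=
    Finset.erase_insert (by simp [hij])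
  have heril : ({i, l} : Finset (Fin 3)).erase i = {l} :=
    Finset.erase_insert (by simp [hil])
  have hτij : ({i, j} : Finset (Fin 3)) ∈ faces (K I b) 2 := by
    rw [faces_top hij hil hjl hKb]; left; rfl
  have hτil : ({i, l} : Finset (Fin 3)) ∈ faces (K I b) 2 := by
    rw [faces_top hij hil hjl hKb]; right; left; rfl
  have hσj : ({j} : Finset (Fin 3)) ∈ faces (K I a) 1 := by
    rw [faces_bot hKa]; left; rfl
  have hσl : ({l} : Finset (Fin 3)) ∈ faces (K I a) 1 := by
    rw [faces_bot hKa]; right; rfl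
  have hjlne : ({j} : Finset (Fin 3)) ≠ {l} := fun h => hjl (Finset.singleton_injective h)
  -- circuit values
  have cjj : circuit k ({{j}} : Finset (Finset (Fin 3))) {j} = 0 := by
    rw [circuit_vertex, sub_self]
  have cll : circuit k ({{l}} : Finset (Finset (Fin 3))) {l} = 0 := by
    rw [circuit_vertex, sub_self]
  have clj_j : circuit k ({{l}} : Finset (Finset (Fin 3))) {j} {j} = 1 := by
    rw [circuit_vertex]
    rw [Finsupp.sub_apply, Finsupp.single_eq_same, Finsupp.single_eq_of_ne' hjlne.symm, sub_zero]
  have clj_l : circuit k ({{l}} : Finset (Finset (Fin 3))) {j} {l} = -1 := by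
    rw [circuit_vertex]
    rw [Finsupp.sub_apply, Finsupp.single_eq_same, Finsupp.single_eq_of_ne' hjlne, zero_sub]
  have cjl_j : circuit k ({{j}} : Finset (Finset (Fin 3))) {l} {j} = -1 := by
    rw [circuit_vertex]
    rw [Finsupp.sub_apply, Finsupp.single_eq_same, Finsupp.single_eq_of_ne' hjlne.symm, zero_sub]
  have cjl_l : circuit k ({{j}} : Finset (Finset (Fin 3))) {l} {l} = 1 := by
    rw [circuit_vertex]
    rw [Finsupp.sub_apply, Finsupp.single_eq_same, Finsupp.single_eq_of_ne' hjlne, sub_zero]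
  have one_ne : (1:k) ≠ 0 := one_ne_zero
  have negone_ne : (-1:k) ≠ 0 := neg_ne_zero.mpr one_ne_zero
  -- coefficient identifications
  have csij : bdry k (Finsupp.single ({i,j} : Finset (Fin 3)) (1:k)) {j} = coeffSign k i {i,j} := by
    rw [coeffSign, herij]
  have csil : bdry k (Finsupp.single ({i,l} : Finset (Fin 3)) (1:k)) {l} = coeffSign k i {i,l} := by
    rw [coeffSign, heril]
  have csj : coeffSign k j {i,j} = - coeffSign k i {i,j} := by
    rw [Finset.pair_comm i j]
    exact coeffSign_pair j i hij.symm
  have csl : coeffSign k l {i,l} = - coeffSign k i {i,l} := by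
    rw [Finset.pair_comm i l]
    exact coeffSign_pair l i hil.symm
  refine ⟨?_, ?_, ?_, ?_, ?_, ?_⟩
  · rw [D_as_Dpath hB,
      Dpath_fstar hij hil hjl hKb hKa hpt hτij herij hσj (Or.inr rfl) {j}
        (by rw [clj_j]; exact one_ne)
        (by rintro T' (rfl | rfl) hne
            · exact absurd (by rw [cjj]; rfl) hne
            · rfl),
      clj_j, csij]
    ring
  · rw [D_as_Dpath hB,
      Dpath_fstar hij hil hjl hKb hKa hpt hτij herij hσj (Or.inr rfl) {l}
        (by rw [clj_l]; exact negone_ne)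
        (by rintro T' (rfl | rfl) hne
            · exact absurd (by rw [cjj]; rfl) hne
            · rfl),
      clj_l, csij, csj]
    ring
  · rw [D_as_Dpath hB,
      Dpath_fstar hij hil hjl hKb hKa hpt hτil heril hσl (Or.inl rfl) {j}
        (by rw [cjl_j]; exact negone_ne)
        (by rintro T' (rfl | rfl) hne
            · rfl
            · exact absurd (by rw [cll]; rfl) hne),
      cjl_j, csil, csl]
    ring
  · rw [D_as_Dpath hB,
      Dpath_fstar hij hil hjl hKb hKa hpt hτil heril hσl (Or.inl rfl) {l}
        (by rw [cjl_l]; exact one_ne)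
        (by rintro T' (rfl | rfl) hne
            · rfl
            · exact absurd (by rw [cll]; rfl) hne),
      cjl_l, csil]
    ring
  · rw [D_as_Dpath hB, Dpath_zero hij hil hjl hKb hKa hpt]
  · rw [D_as_Dpath hB, Dpath_zero hij hil hjl hKb hKa hpt]

end Sylvan

end
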